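/- Let U ⊂ ℝ³ be an open connected neighborhood of the origin, with coordinates (x₁, x₂, t), and consider the vector fields X₁ = ∂_{x₁} − (x₂/2)∂_t and X₂ = ∂_{x₂} + (x₁/2)∂_t. Let A = (a_{ij}) be a real 2×2 matrix with columns A₁, A₂, let a = (a₁, a₂), b = (b₁, b₂) ∈ ℝ², define f_i(x₁, x₂, t) = a_{i1}x₁ + a_{i2}x₂ + a_i t + b_i for i = 1, 2, and let f₃ : U → ℝ be a smooth function. Then the contact equations X₁f₃ = ½(f₁ X₁f₂ − f₂ X₁f₁) and X₂f₃ = ½(f₁ X₂f₂ − f₂ X₂f₁) hold everywhere on U if and only if det(A₁ a) = det(A₂ a) = 0 and there exists τ ∈ ℝ such that f₃(x₁, x₂, t) = τ + (x₂ det(b A₂) + x₁ det(b A₁))/2 + t (det(b a)/2 + det A) on U; here det(u v) denotes the determinant of the 2×2 matrix with columns u, v ∈ ℝ². -/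

import Mathlib

open MeasureTheory Topology

/-- The horizontal vector fields of the Heisenberg group `ℍ¹` in coordinates
`p = (x₁, x₂, t)`, applied to a function `f`:
`X₁f = ∂_{x₁}f − (x₂/2)∂_t f` and `X₂f = ∂_{x₂}f + (x₁/2)∂_t f`. -/
noncomputable def XH (i : Fin 2) (f : ℝ × ℝ × ℝ → ℝ) (p : ℝ × ℝ × ℝ) : ℝ :=
  if i = 0 then fderiv ℝ f p (1, 0, 0) - p.2.1 / 2 * fderiv ℝ f p (0, 0, 1)
  else fderiv ℝ f p (0, 1, 0) + p.1 / 2 * fderiv ℝ f p (0, 0, 1)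

/-- `det(u v)`: determinant of the 2×2 matrix with columns `u, v ∈ ℝ²`. -/
def d2 (u v : Fin 2 → ℝ) : ℝ := u 0 * v 1 - u 1 * v 0

/-- The affine horizontal components `f_i(x₁,x₂,t) = a_{i1}x₁ + a_{i2}x₂ + a_i t + b_i`. -/
def faff (A : Matrix (Fin 2) (Fin 2) ℝ) (a b : Fin 2 → ℝ) (i : Fin 2)
    (p : ℝ × ℝ × ℝ) : ℝ :=
  A i 0 * p.1 + A i 1 * p.2.1 + a i * p.2.2 + b i

noncomputable def Laff (c1 c2 c3 : ℝ) : (ℝ × ℝ × ℝ) →L[ℝ] ℝ :=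
  c1 • (ContinuousLinearMap.fst ℝ ℝ (ℝ × ℝ)) +
    c2 • ((ContinuousLinearMap.fst ℝ ℝ ℝ).comp (ContinuousLinearMap.snd ℝ ℝ (ℝ × ℝ))) +
    c3 • ((ContinuousLinearMap.snd ℝ ℝ ℝ).comp (ContinuousLinearMap.snd ℝ ℝ (ℝ × ℝ)))

@[simp] lemma Laff_apply (c1 c2 c3 : ℝ) (v : ℝ × ℝ × ℝ) :
    Laff c1 c2 c3 v = c1 * v.1 + c2 * v.2.1 + c3 * v.2.2 := by
  simp [Laff]

lemma hasFDerivAt_x (p : ℝ × ℝ × ℝ) :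
    HasFDerivAt (fun q : ℝ × ℝ × ℝ => q.1) (Laff 1 0 0) p := by
  have h : Laff (1:ℝ) 0 0 = ContinuousLinearMap.fst ℝ ℝ (ℝ × ℝ) :=
    ContinuousLinearMap.ext fun v => by simp
  rw [h]; exact hasFDerivAt_fst

lemma hasFDerivAt_y (p : ℝ × ℝ × ℝ) :
    HasFDerivAt (fun q : ℝ × ℝ × ℝ => q.2.1) (Laff 0 1 0) p := by
  have h : Laff (0:ℝ) 1 0 =
      (ContinuousLinearMap.fst ℝ ℝ ℝ).comp (ContinuousLinearMap.snd ℝ ℝ (ℝ × ℝ)) :=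
    ContinuousLinearMap.ext fun v => by simp
  rw [h]; exact hasFDerivAt_fst.comp p hasFDerivAt_snd

lemma hasFDerivAt_t (p : ℝ × ℝ × ℝ) :
    HasFDerivAt (fun q : ℝ × ℝ × ℝ => q.2.2) (Laff 0 0 1) p := by
  have h : Laff (0:ℝ) 0 1 =
      (ContinuousLinearMap.snd ℝ ℝ ℝ).comp (ContinuousLinearMap.snd ℝ ℝ (ℝ × ℝ)) :=
    ContinuousLinearMap.ext fun v => by simp
  rw [h]; exact hasFDerivAt_snd.comp p hasFDerivAt_snd

lemma hasFDerivAt_quad (c0 c1 c2 c3 c11 c12 c13 c22 c23 c33 : ℝ) (p : ℝ × ℝ × ℝ) :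
    HasFDerivAt (fun q : ℝ × ℝ × ℝ =>
        c0 + c1 * q.1 + c2 * q.2.1 + c3 * q.2.2 + c11 * (q.1 * q.1) + c12 * (q.1 * q.2.1)
          + c13 * (q.1 * q.2.2) + c22 * (q.2.1 * q.2.1) + c23 * (q.2.1 * q.2.2)
          + c33 * (q.2.2 * q.2.2))
      (Laff (c1 + 2*c11*p.1 + c12*p.2.1 + c13*p.2.2)
            (c2 + c12*p.1 + 2*c22*p.2.1 + c23*p.2.2)
            (c3 + c13*p.1 + c23*p.2.1 + 2*c33*p.2.2)) p := by
  have H := ((((((((((hasFDerivAt_const c0 p).add ((hasFDerivAt_x p).const_mul c1)).add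
      ((hasFDerivAt_y p).const_mul c2)).add ((hasFDerivAt_t p).const_mul c3)).add
      (((hasFDerivAt_x p).mul (hasFDerivAt_x p)).const_mul c11)).add
      (((hasFDerivAt_x p).mul (hasFDerivAt_y p)).const_mul c12)).add
      (((hasFDerivAt_x p).mul (hasFDerivAt_t p)).const_mul c13)).add
      (((hasFDerivAt_y p).mul (hasFDerivAt_y p)).const_mul c22)).add
      (((hasFDerivAt_y p).mul (hasFDerivAt_t p)).const_mul c23)).add
      (((hasFDerivAt_t p).mul (hasFDerivAt_t p)).const_mul c33))
  refine H.congr_fderiv (ContinuousLinearMap.ext fun v => ?_)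
  simp
  ring

lemma hasFDerivAt_aff (c1 c2 c3 : ℝ) (p : ℝ × ℝ × ℝ) :
    HasFDerivAt (fun q : ℝ × ℝ × ℝ => c1 * q.1 + c2 * q.2.1 + c3 * q.2.2) (Laff c1 c2 c3) p := by
  have H := (((hasFDerivAt_x p).const_mul c1).add ((hasFDerivAt_y p).const_mul c2)).add
    ((hasFDerivAt_t p).const_mul c3)
  refine H.congr_fderiv (ContinuousLinearMap.ext fun v => ?_)
  simp

lemma hasFDerivAt_eval (f : ℝ × ℝ × ℝ → ℝ) (p v : ℝ × ℝ × ℝ)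
    (hf : DifferentiableAt ℝ (fderiv ℝ f) p) :
    HasFDerivAt (fun q => fderiv ℝ f q v)
      ((ContinuousLinearMap.apply ℝ ℝ v).comp (fderiv ℝ (fderiv ℝ f) p)) p :=
  (ContinuousLinearMap.apply ℝ ℝ v).hasFDerivAt.comp p hf.hasFDerivAt

lemma CLM_ext3 {L M : (ℝ × ℝ × ℝ) →L[ℝ] ℝ}
    (h1 : L (1,0,0) = M (1,0,0)) (h2 : L (0,1,0) = M (0,1,0)) (h3 : L (0,0,1) = M (0,0,1)) :
    L = M := by
  refine ContinuousLinearMap.ext fun v => ?_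
  have hv : (v : ℝ × ℝ × ℝ) =
      v.1 • ((1:ℝ),(0:ℝ),(0:ℝ)) + v.2.1 • ((0:ℝ),(1:ℝ),(0:ℝ)) + v.2.2 • ((0:ℝ),(0:ℝ),(1:ℝ)) := by
    simp [Prod.ext_iff]
  rw [hv]
  simp only [map_add, _root_.map_smul, smul_eq_mul]
  rw [h1, h2, h3]

lemma const_on_of_fderiv_zero {f : ℝ × ℝ × ℝ → ℝ} {U : Set (ℝ × ℝ × ℝ)} (hU : IsOpen U)
    (hconn : IsPreconnected U) (hdiff : ∀ p ∈ U, DifferentiableAt ℝ f p)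
    (hzero : ∀ p ∈ U, fderiv ℝ f p = 0) {p₀ : ℝ × ℝ × ℝ} (h₀ : p₀ ∈ U) :
    ∀ p ∈ U, f p = f p₀ := by
  have hloc : ∀ p ∈ U, ∀ᶠ q in nhds p, f q = f p := by
    intro p hp
    obtain ⟨ε, hε, hball⟩ := Metric.isOpen_iff.1 hU p hp
    filter_upwards [Metric.ball_mem_nhds p hε] with q hq
    refine (convex_ball p ε).is_const_of_fderivWithin_eq_zero
      (fun z hz => (hdiff z (hball hz)).differentiableWithinAt) (fun z hz => ?_) hq
      (Metric.mem_ball_self hε)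
    rw [fderivWithin_of_isOpen Metric.isOpen_ball hz]
    exact hzero z (hball hz)
  set S := {p | p ∈ U ∧ f p = f p₀} with hS
  set T := {p | p ∈ U ∧ f p ≠ f p₀} with hT
  have hSopen : IsOpen S := by
    rw [isOpen_iff_mem_nhds]
    rintro p ⟨hpU, hpv⟩
    filter_upwards [hloc p hpU, hU.mem_nhds hpU] with q hq hqU
    exact ⟨hqU, hq.trans hpv⟩
  have hTopen : IsOpen T := by
    rw [isOpen_iff_mem_nhds]
    rintro p ⟨hpU, hpv⟩
    filter_upwards [hloc p hpU, hU.mem_nhds hpU] with q hq hqU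
    exact ⟨hqU, hq.symm ▸ hpv⟩
  have hsub : U ⊆ S := by
    refine hconn.subset_left_of_subset_union hSopen hTopen ?_ ?_ ⟨p₀, h₀, h₀, rfl⟩
    · rw [Set.disjoint_left]; rintro q ⟨_, h1⟩ ⟨_, h2⟩; exact h2 h1
    · intro q hq
      by_cases h : f q = f p₀
      · exact Or.inl ⟨hq, h⟩
      · exact Or.inr ⟨hq, h⟩
  exact fun p hp => (hsub hp).2

theorem fwd_scalar (U : Set (ℝ × ℝ × ℝ)) (hUopen : IsOpen U) (hUconn : IsConnected U)
    (hU0 : ((0:ℝ),(0:ℝ),(0:ℝ)) ∈ U)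
    (α β γ δ a0 a1 b0 b1 : ℝ) (f₃ : ℝ × ℝ × ℝ → ℝ) (hf₃ : ContDiffOn ℝ (⊤:ℕ∞) f₃ U)
    (hyp1 : ∀ p ∈ U, fderiv ℝ f₃ p ((1:ℝ),(0:ℝ),(0:ℝ)) - p.2.1/2 * fderiv ℝ f₃ p ((0:ℝ),(0:ℝ),(1:ℝ)) =
      1/2*((α*p.1+β*p.2.1+a0*p.2.2+b0)*(γ - p.2.1/2*a1) - (γ*p.1+δ*p.2.1+a1*p.2.2+b1)*(α - p.2.1/2*a0)))
    (hyp2 : ∀ p ∈ U, fderiv ℝ f₃ p ((0:ℝ),(1:ℝ),(0:ℝ)) + p.1/2 * fderiv ℝ f₃ p ((0:ℝ),(0:ℝ),(1:ℝ)) =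
      1/2*((α*p.1+β*p.2.1+a0*p.2.2+b0)*(δ + p.1/2*a1) - (γ*p.1+δ*p.2.1+a1*p.2.2+b1)*(β + p.1/2*a0))) :
    (α*a1 - γ*a0 = 0) ∧ (β*a1 - δ*a0 = 0) ∧
      ∀ p ∈ U, f₃ p = f₃ ((0:ℝ),(0:ℝ),(0:ℝ)) + (p.2.1*(b0*δ - b1*β) + p.1*(b0*γ - b1*α))/2
        + p.2.2*((b0*a1 - b1*a0)/2 + (α*δ - β*γ)) := by
  have hat : ∀ p ∈ U, ContDiffAt ℝ ((⊤:ℕ∞) : WithTop ℕ∞) f₃ p :=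
    fun p hp => hf₃.contDiffAt (hUopen.mem_nhds hp)
  have hdiff : ∀ p ∈ U, DifferentiableAt ℝ f₃ p :=
    fun p hp => (hat p hp).differentiableAt (by simp)
  have hF' : ∀ p ∈ U, DifferentiableAt ℝ (fderiv ℝ f₃) p :=
    fun p hp => ((hat p hp).fderiv_right (m := 1) (WithTop.coe_le_coe.2 le_top)).differentiableAt one_ne_zero
  have hsymm : ∀ p ∈ U, ∀ v w,
      fderiv ℝ (fderiv ℝ f₃) p v w = fderiv ℝ (fderiv ℝ f₃) p w v :=
    fun p hp => (hat p hp).isSymmSndFDerivAt (by rw [minSmoothness_of_isRCLikeNormedField]; exact le_trans (by norm_num) (WithTop.coe_le_coe.2 (le_top : (2:ℕ∞) ≤ ⊤)))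
  -- rewritten contact equations
  have E1 : ∀ p ∈ U, fderiv ℝ f₃ p ((1:ℝ),(0:ℝ),(0:ℝ)) =
      1/2 * (p.2.1 * fderiv ℝ f₃ p ((0:ℝ),(0:ℝ),(1:ℝ))) +
      ((b0*γ-b1*α)/2 + 0*p.1 + (-(α*δ-β*γ)/2-(b0*a1-b1*a0)/4)*p.2.1 + (-(α*a1-γ*a0)/2)*p.2.2
        + 0*(p.1*p.1) + (-(α*a1-γ*a0)/4)*(p.1*p.2.1) + 0*(p.1*p.2.2)
        + (-(β*a1-δ*a0)/4)*(p.2.1*p.2.1) + 0*(p.2.1*p.2.2) + 0*(p.2.2*p.2.2)) := by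
    intro p hp
    linear_combination hyp1 p hp
  have E2 : ∀ p ∈ U, fderiv ℝ f₃ p ((0:ℝ),(1:ℝ),(0:ℝ)) =
      -(1/2) * (p.1 * fderiv ℝ f₃ p ((0:ℝ),(0:ℝ),(1:ℝ))) +
      ((b0*δ-b1*β)/2 + ((α*δ-β*γ)/2+(b0*a1-b1*a0)/4)*p.1 + 0*p.2.1 + (-(β*a1-δ*a0)/2)*p.2.2
        + ((α*a1-γ*a0)/4)*(p.1*p.1) + ((β*a1-δ*a0)/4)*(p.1*p.2.1) + 0*(p.1*p.2.2)
        + 0*(p.2.1*p.2.1) + 0*(p.2.1*p.2.2) + 0*(p.2.2*p.2.2)) := by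
    intro p hp
    linear_combination hyp2 p hp
  -- second-derivative relations at each point of U
  have master : ∀ p ∈ U,
      (fderiv ℝ (fderiv ℝ f₃) p ((0:ℝ),(1:ℝ),(0:ℝ)) ((1:ℝ),(0:ℝ),(0:ℝ)) =
        fderiv ℝ f₃ p ((0:ℝ),(0:ℝ),(1:ℝ))/2
        + p.2.1/2 * fderiv ℝ (fderiv ℝ f₃) p ((0:ℝ),(1:ℝ),(0:ℝ)) ((0:ℝ),(0:ℝ),(1:ℝ))
        + (-(α*δ-β*γ)/2 - (b0*a1-b1*a0)/4 - (α*a1-γ*a0)/4*p.1 - (β*a1-δ*a0)/2*p.2.1)) ∧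
      (fderiv ℝ (fderiv ℝ f₃) p ((0:ℝ),(0:ℝ),(1:ℝ)) ((1:ℝ),(0:ℝ),(0:ℝ)) =
        p.2.1/2 * fderiv ℝ (fderiv ℝ f₃) p ((0:ℝ),(0:ℝ),(1:ℝ)) ((0:ℝ),(0:ℝ),(1:ℝ))
        - (α*a1-γ*a0)/2) ∧
      (fderiv ℝ (fderiv ℝ f₃) p ((1:ℝ),(0:ℝ),(0:ℝ)) ((0:ℝ),(1:ℝ),(0:ℝ)) =
        -(fderiv ℝ f₃ p ((0:ℝ),(0:ℝ),(1:ℝ))/2)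
        - p.1/2 * fderiv ℝ (fderiv ℝ f₃) p ((1:ℝ),(0:ℝ),(0:ℝ)) ((0:ℝ),(0:ℝ),(1:ℝ))
        + ((α*δ-β*γ)/2 + (b0*a1-b1*a0)/4 + (α*a1-γ*a0)/2*p.1 + (β*a1-δ*a0)/4*p.2.1)) ∧
      (fderiv ℝ (fderiv ℝ f₃) p ((0:ℝ),(0:ℝ),(1:ℝ)) ((0:ℝ),(1:ℝ),(0:ℝ)) =
        -(p.1/2 * fderiv ℝ (fderiv ℝ f₃) p ((0:ℝ),(0:ℝ),(1:ℝ)) ((0:ℝ),(0:ℝ),(1:ℝ)))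
        - (β*a1-δ*a0)/2) := by
    intro p hp
    have hu3 := hasFDerivAt_eval f₃ p ((0:ℝ),(0:ℝ),(1:ℝ)) (hF' p hp)
    have hu1 := hasFDerivAt_eval f₃ p ((1:ℝ),(0:ℝ),(0:ℝ)) (hF' p hp)
    have hu2 := hasFDerivAt_eval f₃ p ((0:ℝ),(1:ℝ),(0:ℝ)) (hF' p hp)
    have hR1 := (((hasFDerivAt_y p).mul hu3).const_mul (1/2)).add
      (hasFDerivAt_quad ((b0*γ-b1*α)/2) 0 (-(α*δ-β*γ)/2-(b0*a1-b1*a0)/4) (-(α*a1-γ*a0)/2)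
        0 (-(α*a1-γ*a0)/4) 0 (-(β*a1-δ*a0)/4) 0 0 p)
    have key1 := hu1.unique (hR1.congr_of_eventuallyEq
      (Filter.eventuallyEq_of_mem (hUopen.mem_nhds hp) fun q hq => E1 q hq))
    have hR2 := (((hasFDerivAt_x p).mul hu3).const_mul (-(1/2))).add
      (hasFDerivAt_quad ((b0*δ-b1*β)/2) ((α*δ-β*γ)/2+(b0*a1-b1*a0)/4) 0 (-(β*a1-δ*a0)/2)
        ((α*a1-γ*a0)/4) ((β*a1-δ*a0)/4) 0 0 0 0 p)
    have key2 := hu2.unique (hR2.congr_of_eventuallyEq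
      (Filter.eventuallyEq_of_mem (hUopen.mem_nhds hp) fun q hq => E2 q hq))
    have m1 := congrArg (fun L : (ℝ × ℝ × ℝ) →L[ℝ] ℝ => L ((0:ℝ),(1:ℝ),(0:ℝ))) key1
    have m2 := congrArg (fun L : (ℝ × ℝ × ℝ) →L[ℝ] ℝ => L ((0:ℝ),(0:ℝ),(1:ℝ))) key1
    have m3 := congrArg (fun L : (ℝ × ℝ × ℝ) →L[ℝ] ℝ => L ((1:ℝ),(0:ℝ),(0:ℝ))) key2
    have m4 := congrArg (fun L : (ℝ × ℝ × ℝ) →L[ℝ] ℝ => L ((0:ℝ),(0:ℝ),(1:ℝ))) key2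
    simp only [ContinuousLinearMap.add_apply, ContinuousLinearMap.smul_apply,
      ContinuousLinearMap.coe_comp', Function.comp_apply, ContinuousLinearMap.apply_apply,
      Laff_apply, smul_eq_mul] at m1 m2 m3 m4
    refine ⟨by linear_combination m1, by linear_combination m2,
      by linear_combination m3, by linear_combination m4⟩
  have E3 : ∀ p ∈ U, fderiv ℝ f₃ p ((0:ℝ),(0:ℝ),(1:ℝ)) =
      ((α*δ-β*γ)+(b0*a1-b1*a0)/2) + (α*a1-γ*a0)*p.1 + (β*a1-δ*a0)*p.2.1 + 0*p.2.2
        + 0*(p.1*p.1) + 0*(p.1*p.2.1) + 0*(p.1*p.2.2) + 0*(p.2.1*p.2.1) + 0*(p.2.1*p.2.2)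
        + 0*(p.2.2*p.2.2) := by
    intro p hp
    obtain ⟨m1, m2, m3, m4⟩ := master p hp
    have s1 := hsymm p hp ((0:ℝ),(1:ℝ),(0:ℝ)) ((1:ℝ),(0:ℝ),(0:ℝ))
    have s2 := hsymm p hp ((0:ℝ),(0:ℝ),(1:ℝ)) ((1:ℝ),(0:ℝ),(0:ℝ))
    have s3 := hsymm p hp ((0:ℝ),(0:ℝ),(1:ℝ)) ((0:ℝ),(1:ℝ),(0:ℝ))
    linear_combination m3 - m1 + s1 + (p.1/2)*(s2 - m2) + (p.2.1/2)*(s3 - m4)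
  -- the two determinant conditions
  have hK1 : α*a1 - γ*a0 = 0 := by
    obtain ⟨-, m2, -, -⟩ := master _ hU0
    have s2 := hsymm _ hU0 ((0:ℝ),(0:ℝ),(1:ℝ)) ((1:ℝ),(0:ℝ),(0:ℝ))
    have hu3 := hasFDerivAt_eval f₃ ((0:ℝ),(0:ℝ),(0:ℝ)) ((0:ℝ),(0:ℝ),(1:ℝ)) (hF' _ hU0)
    have hR3 := hasFDerivAt_quad ((α*δ-β*γ)+(b0*a1-b1*a0)/2) (α*a1-γ*a0) (β*a1-δ*a0) 0
      0 0 0 0 0 0 ((0:ℝ),(0:ℝ),(0:ℝ))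
    have key3 := hu3.unique (hR3.congr_of_eventuallyEq
      (Filter.eventuallyEq_of_mem (hUopen.mem_nhds hU0) fun q hq => E3 q hq))
    have n1 := congrArg (fun L : (ℝ × ℝ × ℝ) →L[ℝ] ℝ => L ((1:ℝ),(0:ℝ),(0:ℝ))) key3
    have n3 := congrArg (fun L : (ℝ × ℝ × ℝ) →L[ℝ] ℝ => L ((0:ℝ),(0:ℝ),(1:ℝ))) key3
    simp only [ContinuousLinearMap.coe_comp', Function.comp_apply,
      ContinuousLinearMap.apply_apply, Laff_apply] at n1 n3
    norm_num at n1 n3 m2 s2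
    linarith [n1, n3, m2, s2]
  have hK2 : β*a1 - δ*a0 = 0 := by
    obtain ⟨-, -, -, m4⟩ := master _ hU0
    have s3 := hsymm _ hU0 ((0:ℝ),(0:ℝ),(1:ℝ)) ((0:ℝ),(1:ℝ),(0:ℝ))
    have hu3 := hasFDerivAt_eval f₃ ((0:ℝ),(0:ℝ),(0:ℝ)) ((0:ℝ),(0:ℝ),(1:ℝ)) (hF' _ hU0)
    have hR3 := hasFDerivAt_quad ((α*δ-β*γ)+(b0*a1-b1*a0)/2) (α*a1-γ*a0) (β*a1-δ*a0) 0
      0 0 0 0 0 0 ((0:ℝ),(0:ℝ),(0:ℝ))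
    have key3 := hu3.unique (hR3.congr_of_eventuallyEq
      (Filter.eventuallyEq_of_mem (hUopen.mem_nhds hU0) fun q hq => E3 q hq))
    have n2 := congrArg (fun L : (ℝ × ℝ × ℝ) →L[ℝ] ℝ => L ((0:ℝ),(1:ℝ),(0:ℝ))) key3
    have n3 := congrArg (fun L : (ℝ × ℝ × ℝ) →L[ℝ] ℝ => L ((0:ℝ),(0:ℝ),(1:ℝ))) key3
    simp only [ContinuousLinearMap.coe_comp', Function.comp_apply,
      ContinuousLinearMap.apply_apply, Laff_apply] at n2 n3
    norm_num at n2 n3 m4 s3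
    linarith [n2, n3, m4, s3]
  refine ⟨hK1, hK2, ?_⟩
  -- the full gradient is constant on U
  have hgrad : ∀ p ∈ U, fderiv ℝ f₃ p =
      Laff ((b0*γ-b1*α)/2) ((b0*δ-b1*β)/2) ((b0*a1-b1*a0)/2 + (α*δ-β*γ)) := by
    intro p hp
    have h3 : fderiv ℝ f₃ p ((0:ℝ),(0:ℝ),(1:ℝ)) = (b0*a1-b1*a0)/2 + (α*δ-β*γ) := by
      linear_combination E3 p hp + p.1*hK1 + p.2.1*hK2
    have h1 : fderiv ℝ f₃ p ((1:ℝ),(0:ℝ),(0:ℝ)) = (b0*γ-b1*α)/2 := by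
      linear_combination E1 p hp + p.2.1/2 * h3 - (p.1*p.2.1/4)*hK1 - (p.2.1*p.2.1/4)*hK2 - (p.2.2/2)*hK1
    have h2 : fderiv ℝ f₃ p ((0:ℝ),(1:ℝ),(0:ℝ)) = (b0*δ-b1*β)/2 := by
      linear_combination E2 p hp - p.1/2 * h3 + (p.1*p.1/4)*hK1 + (p.1*p.2.1/4)*hK2 - (p.2.2/2)*hK2
    refine CLM_ext3 ?_ ?_ ?_
    · rw [Laff_apply]; rw [h1]; norm_num
    · rw [Laff_apply]; rw [h2]; norm_num
    · rw [Laff_apply]; rw [h3]; norm_num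
  -- conclude by constancy of f₃ - affine
  have hgd : ∀ p, HasFDerivAt
      (fun q : ℝ × ℝ × ℝ => ((b0*γ-b1*α)/2)*q.1 + ((b0*δ-b1*β)/2)*q.2.1
        + ((b0*a1-b1*a0)/2 + (α*δ-β*γ))*q.2.2)
      (Laff ((b0*γ-b1*α)/2) ((b0*δ-b1*β)/2) ((b0*a1-b1*a0)/2 + (α*δ-β*γ))) p :=
    fun p => hasFDerivAt_aff _ _ _ p
  have hzero : ∀ p ∈ U, fderiv ℝ
      (fun q : ℝ × ℝ × ℝ => f₃ q - (((b0*γ-b1*α)/2)*q.1 + ((b0*δ-b1*β)/2)*q.2.1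
        + ((b0*a1-b1*a0)/2 + (α*δ-β*γ))*q.2.2)) p = 0 := by
    intro p hp
    have := ((hdiff p hp).hasFDerivAt.sub (hgd p)).fderiv
    simp only [Pi.sub_def] at this
    rw [this, hgrad p hp, sub_self]
  have hconst := const_on_of_fderiv_zero hUopen hUconn.isPreconnected
    (fun p hp => (hdiff p hp).sub (hgd p).differentiableAt) hzero hU0
  intro p hp
  have := hconst p hp
  simp only [Pi.sub_apply] at this
  linear_combination this

lemma hasFDerivAt_faff (A : Matrix (Fin 2) (Fin 2) ℝ) (a b : Fin 2 → ℝ) (i : Fin 2)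
    (p : ℝ × ℝ × ℝ) :
    HasFDerivAt (faff A a b i) (Laff (A i 0) (A i 1) (a i)) p :=
  (hasFDerivAt_aff (A i 0) (A i 1) (a i) p).add_const (b i)

/-- characterization of the smooth Lipschitz mappings of `ℍ¹` with affine
horizontal components; the contact equations `X_i f₃ = ½(f₁ X_i f₂ − f₂ X_i f₁)` hold on
`U` iff `det(A₁ a) = det(A₂ a) = 0` and `f₃` has the stated explicit affine form. -/
theorem stmt9 (U : Set (ℝ × ℝ × ℝ)) (hUopen : IsOpen U) (hUconn : IsConnected U)
    (hU0 : ((0 : ℝ), (0 : ℝ), (0 : ℝ)) ∈ U)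
    (A : Matrix (Fin 2) (Fin 2) ℝ) (a b : Fin 2 → ℝ)
    (f₃ : ℝ × ℝ × ℝ → ℝ) (hf₃ : ContDiffOn ℝ (⊤ : ℕ∞) f₃ U) :
    (∀ p ∈ U, ∀ i : Fin 2,
        XH i f₃ p = 1 / 2 *
          (faff A a b 0 p * XH i (faff A a b 1) p -
            faff A a b 1 p * XH i (faff A a b 0) p))
    ↔ (d2 (fun i => A i 0) a = 0 ∧ d2 (fun i => A i 1) a = 0 ∧
        ∃ τ : ℝ, ∀ p ∈ U,
          f₃ p = τ +
            (p.2.1 * d2 b (fun i => A i 1) + p.1 * d2 b (fun i => A i 0)) / 2 +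
            p.2.2 * (d2 b a / 2 + A.det)) := by

  constructor
  · intro hyp
    have hyp1 : ∀ p ∈ U, fderiv ℝ f₃ p ((1:ℝ),(0:ℝ),(0:ℝ)) - p.2.1/2 * fderiv ℝ f₃ p ((0:ℝ),(0:ℝ),(1:ℝ)) =
        1/2*((A 0 0*p.1+A 0 1*p.2.1+a 0*p.2.2+b 0)*(A 1 0 - p.2.1/2*a 1)
          - (A 1 0*p.1+A 1 1*p.2.1+a 1*p.2.2+b 1)*(A 0 0 - p.2.1/2*a 0)) := by
      intro p hp
      have H := hyp p hp 0
      simp only [XH, if_pos rfl] at H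
      rw [(hasFDerivAt_faff A a b 0 p).fderiv, (hasFDerivAt_faff A a b 1 p).fderiv] at H
      simp only [Laff_apply, faff] at H
      norm_num at H
      linear_combination H
    have hyp2 : ∀ p ∈ U, fderiv ℝ f₃ p ((0:ℝ),(1:ℝ),(0:ℝ)) + p.1/2 * fderiv ℝ f₃ p ((0:ℝ),(0:ℝ),(1:ℝ)) =
        1/2*((A 0 0*p.1+A 0 1*p.2.1+a 0*p.2.2+b 0)*(A 1 1 + p.1/2*a 1)
          - (A 1 0*p.1+A 1 1*p.2.1+a 1*p.2.2+b 1)*(A 0 1 + p.1/2*a 0)) := by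
      intro p hp
      have H := hyp p hp 1
      simp only [XH, if_neg (by decide : ¬ (1 : Fin 2) = 0)] at H
      rw [(hasFDerivAt_faff A a b 0 p).fderiv, (hasFDerivAt_faff A a b 1 p).fderiv] at H
      simp only [Laff_apply, faff] at H
      norm_num at H
      linear_combination H
    obtain ⟨k1, k2, hform⟩ := fwd_scalar U hUopen hUconn hU0 (A 0 0) (A 0 1) (A 1 0) (A 1 1)
      (a 0) (a 1) (b 0) (b 1) f₃ hf₃ hyp1 hyp2
    refine ⟨by simp only [d2]; linear_combination k1, by simp only [d2]; linear_combination k2,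
      f₃ ((0:ℝ),(0:ℝ),(0:ℝ)), fun p hp => ?_⟩
    simp only [d2, Matrix.det_fin_two]
    linear_combination hform p hp
  · rintro ⟨k1, k2, τ, hform⟩ p hp i
    simp only [d2] at k1 k2
    simp only [d2, Matrix.det_fin_two] at hform
    have base : HasFDerivAt (fun q : ℝ × ℝ × ℝ => τ +
        (q.2.1 * (b 0 * A 1 1 - b 1 * A 0 1) + q.1 * (b 0 * A 1 0 - b 1 * A 0 0)) / 2 +
        q.2.2 * ((b 0 * a 1 - b 1 * a 0) / 2 + (A 0 0 * A 1 1 - A 0 1 * A 1 0)))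
        (Laff ((b 0*A 1 0 - b 1*A 0 0)/2) ((b 0*A 1 1 - b 1*A 0 1)/2)
          ((b 0*a 1 - b 1*a 0)/2 + (A 0 0*A 1 1 - A 0 1*A 1 0))) p := by
      have hfun : (fun q : ℝ × ℝ × ℝ => τ +
          (q.2.1 * (b 0 * A 1 1 - b 1 * A 0 1) + q.1 * (b 0 * A 1 0 - b 1 * A 0 0)) / 2 +
          q.2.2 * ((b 0 * a 1 - b 1 * a 0) / 2 + (A 0 0 * A 1 1 - A 0 1 * A 1 0))) =
          (fun q : ℝ × ℝ × ℝ => τ + ((b 0*A 1 0 - b 1*A 0 0)/2) * q.1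
            + ((b 0*A 1 1 - b 1*A 0 1)/2) * q.2.1
            + ((b 0*a 1 - b 1*a 0)/2 + (A 0 0*A 1 1 - A 0 1*A 1 0)) * q.2.2
            + 0*(q.1*q.1) + 0*(q.1*q.2.1) + 0*(q.1*q.2.2) + 0*(q.2.1*q.2.1)
            + 0*(q.2.1*q.2.2) + 0*(q.2.2*q.2.2)) := by
        funext q; ring
      rw [hfun]
      exact (hasFDerivAt_quad τ _ _ _ 0 0 0 0 0 0 p).congr_fderiv
        (ContinuousLinearMap.ext fun v => by simp)
    have hfd : HasFDerivAt f₃ (Laff ((b 0*A 1 0 - b 1*A 0 0)/2) ((b 0*A 1 1 - b 1*A 0 1)/2)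
        ((b 0*a 1 - b 1*a 0)/2 + (A 0 0*A 1 1 - A 0 1*A 1 0))) p :=
      base.congr_of_eventuallyEq
        (Filter.eventuallyEq_of_mem (hUopen.mem_nhds hp) fun q hq => hform q hq)
    fin_cases i
    · simp only [XH, if_pos rfl]
      rw [hfd.fderiv, (hasFDerivAt_faff A a b 0 p).fderiv, (hasFDerivAt_faff A a b 1 p).fderiv]
      simp only [Laff_apply, faff]
      norm_num
      linear_combination (p.2.2/2 + p.1*p.2.1/4) * k1 + (p.2.1*p.2.1/4) * k2
    · simp only [XH, if_neg (by decide : ¬ (1 : Fin 2) = 0)]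
      rw [hfd.fderiv, (hasFDerivAt_faff A a b 0 p).fderiv, (hasFDerivAt_faff A a b 1 p).fderiv]
      simp only [Laff_apply, faff]
      norm_num
      linear_combination (-(p.1*p.1)/4) * k1 + (p.2.2/2 - p.1*p.2.1/4) * k2
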